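/- For real numbers ℓmin, ℓmax with 0 < ℓmin ≤ ℓmax and speedup s > 1, let γ = max{⌈(ℓmax − s·ℓmin)/((s−1)·ℓmin)⌉, 0}. Then for every non-negative integer κ < γ, (κ·ℓmin + ℓmax)/s > (κ+1)·ℓmin. -/
import Mathlib

theorem stmt_2 (lmin lmax s : ℝ) (h0 : 0 < lmin) (h1 : lmin ≤ lmax) (hs : 1 < s) :
    let γ : ℤ := max ⌈(lmax - s * lmin) / ((s - 1) * lmin)⌉ 0
    ∀ κ : ℤ, 0 ≤ κ → κ < γ → ((κ : ℝ) * lmin + lmax) / s > ((κ : ℝ) + 1) * lmin := by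
  intro γ κ hκ0 hκγ
  have hden : 0 < (s - 1) * lmin := mul_pos (by linarith) h0
  have hceil : κ < ⌈(lmax - s * lmin) / ((s - 1) * lmin)⌉ := by
    rcases (max_cases ⌈(lmax - s * lmin) / ((s - 1) * lmin)⌉ 0) with ⟨h, _⟩ | ⟨h, hlt⟩ <;> omega
  have hlt : (κ : ℝ) < (lmax - s * lmin) / ((s - 1) * lmin) := Int.lt_ceil.mp hceil
  have h2 : (κ : ℝ) * ((s - 1) * lmin) < lmax - s * lmin := (lt_div_iff₀ hden).mp hlt
  rw [gt_iff_lt, lt_div_iff₀ (by linarith : (0:ℝ) < s)]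
  nlinarith
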